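/- Let λ ∈ ℂ, λ ≠ 0, and n ≥ 1. Let Ω(λ,n) be the n×n matrix with entries x_{i,j} given by: x_{i,j} = 0 if i > j; x_{i,n} = 0 for i ≠ n; x_{n,n} = 1; x_{i,i} = (−1)^{n−i} λ^{−2(n−i)}; and x_{i,j} = (−1)^{n−i} C(n−i−1, j−i) λ^{−2n+i+j} for i < j, j ≠ n. Then Ω(λ,n) is invertible and (Ω(λ,n))⁻¹ = Ω(λ⁻¹,n). -/

import Mathlib

/-- The matrix `Ω(λ, n)` (indices `1, …, n` in the paper correspond to `0, …, n-1` here):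
`x_{i,j} = 0` for `i > j`; `x_{i,n} = 0` for `i ≠ n`; `x_{n,n} = 1`;
`x_{i,i} = (-1)^{n-i} λ^{-2(n-i)}`; and
`x_{i,j} = (-1)^{n-i} C(n-i-1, j-i) λ^{-2n+i+j}` for `i < j`, `j ≠ n`. -/
noncomputable def Omega (lam : ℂ) (n : ℕ) : Matrix (Fin n) (Fin n) ℂ :=
  Matrix.of fun i j =>
    if (j : ℕ) < (i : ℕ) then 0
    else if i = j then (-1 : ℂ) ^ (n - 1 - (i : ℕ)) * lam ^ (-(2 * ((n : ℤ) - 1 - (i : ℕ))))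
    else if (j : ℕ) = n - 1 then 0
    else (-1 : ℂ) ^ (n - 1 - (i : ℕ)) * ((n - 2 - (i : ℕ)).choose ((j : ℕ) - (i : ℕ))) *
      lam ^ ((i : ℤ) + (j : ℕ) + 2 - 2 * n)

lemma alt_sum_aux (a d : ℕ) (hd : d ≠ 0) (hda : d ≤ a) :
    ∑ t ∈ Finset.range (d + 1),
      (-1 : ℂ) ^ t * (a.choose t) * ((a - t).choose (d - t)) = 0 := by
  have hrw : ∀ t ∈ Finset.range (d + 1),
      (-1 : ℂ) ^ t * (a.choose t) * ((a - t).choose (d - t))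
        = (a.choose d : ℂ) * ((-1) ^ t * (d.choose t)) := by
    intro t ht
    have htd : t ≤ d := Finset.mem_range_succ_iff.mp ht
    have hc : ((a.choose t : ℂ)) * ((a - t).choose (d - t))
        = (a.choose d : ℂ) * (d.choose t) := by
      exact_mod_cast congrArg (Nat.cast : ℕ → ℂ) (Nat.choose_mul (n := a) htd).symm
    rw [mul_assoc, hc]; ring
  rw [Finset.sum_congr rfl hrw, ← Finset.mul_sum]
  have h0 : ∑ t ∈ Finset.range (d + 1), (-1 : ℂ) ^ t * (d.choose t) = 0 := by
    have h := Int.alternating_sum_range_choose_of_ne hd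
    have h2 := congrArg (Int.cast : ℤ → ℂ) h
    push_cast at h2
    exact h2
  rw [h0, mul_zero]

lemma omega_entry (n : ℕ) (lam : ℂ) {i j : Fin n} (hij : (i : ℕ) ≤ (j : ℕ))
    (hj : (j : ℕ) < n - 1) :
    Omega lam n i j = (-1 : ℂ) ^ (n - 1 - (i : ℕ)) *
      ((n - 2 - (i : ℕ)).choose ((j : ℕ) - (i : ℕ))) *
      lam ^ ((i : ℤ) + (j : ℕ) + 2 - 2 * n) := by
  unfold Omega
  rw [Matrix.of_apply, if_neg (not_lt.mpr hij)]
  by_cases h : i = j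
  · subst h
    rw [if_pos rfl, Nat.sub_self, Nat.choose_zero_right, Nat.cast_one, mul_one]
    congr 1
    ring_nf
  · rw [if_neg h, if_neg (Nat.ne_of_lt hj)]

lemma omega_mul (n : ℕ) (lam : ℂ) (hlam : lam ≠ 0) :
    Omega lam n * Omega lam⁻¹ n = 1 := by
  ext i k
  rw [Matrix.mul_apply, Matrix.one_apply]
  rcases lt_trichotomy (k : ℕ) (i : ℕ) with hki | hik | hik
  · -- k < i : everything vanishes
    rw [if_neg (fun h => absurd (congrArg Fin.val h) (by omega))]
    refine Finset.sum_eq_zero fun j _ => ?_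
    by_cases hj : (j : ℕ) < (i : ℕ)
    · unfold Omega; rw [Matrix.of_apply, if_pos hj, zero_mul]
    · have : (k : ℕ) < (j : ℕ) := by omega
      conv_lhs => rw [show Omega lam⁻¹ n j k = 0 by unfold Omega; rw [Matrix.of_apply, if_pos this]]
      rw [mul_zero]
  · -- i = k : diagonal
    have hik' : i = k := Fin.ext hik.symm
    subst hik'
    rw [if_pos rfl]
    rw [Finset.sum_eq_single_of_mem i (Finset.mem_univ i)]
    · unfold Omega
      rw [Matrix.of_apply, Matrix.of_apply, if_neg (lt_irrefl _), if_pos rfl,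
        if_neg (lt_irrefl _), if_pos rfl]
      set z : ℤ := -(2 * ((n : ℤ) - 1 - (i : ℕ))) with hz
      rw [inv_zpow]
      have h2 : lam ^ z ≠ 0 := zpow_ne_zero _ hlam
      rw [mul_mul_mul_comm, ← mul_pow, mul_inv_cancel₀ h2, neg_mul_neg, one_mul, one_pow, mul_one]
    · intro j _ hj
      by_cases hji : (j : ℕ) < (i : ℕ)
      · unfold Omega; rw [Matrix.of_apply, if_pos hji, zero_mul]
      · have : (i : ℕ) < (j : ℕ) := by
          rcases lt_or_eq_of_le (not_lt.mp hji) with h | h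
          · exact h
          · exact absurd (Fin.ext h.symm) hj
        conv_lhs => rw [show Omega lam⁻¹ n j i = 0 by
          unfold Omega; rw [Matrix.of_apply, if_pos this]]
        rw [mul_zero]
  · -- i < k
    have hne : ¬ i = k := fun h => by rw [h] at hik; exact lt_irrefl _ hik
    rw [if_neg hne]
    by_cases hk : (k : ℕ) = n - 1
    · -- last column
      refine Finset.sum_eq_zero fun j _ => ?_
      by_cases hj1 : (j : ℕ) < (i : ℕ)
      · unfold Omega; rw [Matrix.of_apply, if_pos hj1, zero_mul]
      by_cases hj2 : (k : ℕ) < (j : ℕ)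
      · conv_lhs => rw [show Omega lam⁻¹ n j k = 0 by
          unfold Omega; rw [Matrix.of_apply, if_pos hj2]]
        rw [mul_zero]
      by_cases hjk : j = k
      · subst hjk
        have : Omega lam n i j = 0 := by
          unfold Omega
          rw [Matrix.of_apply, if_neg (not_lt.mpr (le_of_lt hik)), if_neg hne, if_pos hk]
        rw [this, zero_mul]
      · have : Omega lam⁻¹ n j k = 0 := by
          unfold Omega
          rw [Matrix.of_apply, if_neg hj2, if_neg hjk, if_pos hk]
        rw [this, mul_zero]
    · -- i < k < n - 1 : the interesting case
      have hkn : (k : ℕ) < n - 1 := lt_of_le_of_ne (by have := k.isLt; omega) hk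
      set a : ℕ := n - 2 - (i : ℕ) with ha
      set d : ℕ := (k : ℕ) - (i : ℕ) with hd
      have hstep : ∀ j : Fin n, Omega lam n i j * Omega lam⁻¹ n j k =
          (fun jn : ℕ => if (i : ℕ) ≤ jn ∧ jn ≤ (k : ℕ) then
            ((-1 : ℂ) ^ (jn - (i : ℕ)) * (a.choose (jn - (i : ℕ)))
              * ((a - (jn - (i : ℕ))).choose (d - (jn - (i : ℕ)))))
            * lam ^ ((i : ℤ) - (k : ℕ)) else 0) (j : ℕ) := by
        intro j
        by_cases hj1 : (j : ℕ) < (i : ℕ)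
        · simp only
          rw [if_neg (by omega)]
          unfold Omega; rw [Matrix.of_apply, if_pos hj1, zero_mul]
        by_cases hj2 : (k : ℕ) < (j : ℕ)
        · simp only
          rw [if_neg (by omega)]
          conv_lhs => rw [show Omega lam⁻¹ n j k = 0 by
            unfold Omega; rw [Matrix.of_apply, if_pos hj2]]
          rw [mul_zero]
        · have hij : (i : ℕ) ≤ (j : ℕ) := not_lt.mp hj1
          have hjk : (j : ℕ) ≤ (k : ℕ) := not_lt.mp hj2
          simp only
          rw [if_pos ⟨hij, hjk⟩]
          rw [omega_entry n lam hij (by omega), omega_entry n lam⁻¹ hjk hkn]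
          set t : ℕ := (j : ℕ) - (i : ℕ) with ht
          have hch1 : n - 2 - (j : ℕ) = a - t := by omega
          have hch2 : (k : ℕ) - (j : ℕ) = d - t := by omega
          rw [hch1, hch2]
          have hsign : (-1 : ℂ) ^ (n - 1 - (i : ℕ)) * (-1 : ℂ) ^ (n - 1 - (j : ℕ))
              = (-1 : ℂ) ^ t := by
            rw [← pow_add, show (n - 1 - (i : ℕ)) + (n - 1 - (j : ℕ))
              = 2 * (n - 1 - (j : ℕ)) + t from by omega, pow_add, pow_mul,
              neg_one_sq, one_pow, one_mul]
          have hzp : lam ^ ((i : ℤ) + (j : ℕ) + 2 - 2 * n)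
              * (lam⁻¹) ^ ((j : ℤ) + (k : ℕ) + 2 - 2 * n)
              = lam ^ ((i : ℤ) - (k : ℕ)) := by
            rw [inv_zpow, ← zpow_neg, ← zpow_add₀ hlam]
            congr 1
            ring
          calc (-1 : ℂ) ^ (n - 1 - (i : ℕ)) * (a.choose t) *
                lam ^ ((i : ℤ) + (j : ℕ) + 2 - 2 * n) *
              ((-1 : ℂ) ^ (n - 1 - (j : ℕ)) * ((a - t).choose (d - t)) *
                (lam⁻¹) ^ ((j : ℤ) + (k : ℕ) + 2 - 2 * n))
              = ((-1 : ℂ) ^ (n - 1 - (i : ℕ)) * (-1 : ℂ) ^ (n - 1 - (j : ℕ)))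
                * ((a.choose t : ℂ) * ((a - t).choose (d - t)))
                * (lam ^ ((i : ℤ) + (j : ℕ) + 2 - 2 * n)
                  * (lam⁻¹) ^ ((j : ℤ) + (k : ℕ) + 2 - 2 * n)) := by ring
            _ = (-1 : ℂ) ^ t * ((a.choose t : ℂ) * ((a - t).choose (d - t)))
                * lam ^ ((i : ℤ) - (k : ℕ)) := by rw [hsign, hzp]
            _ = (-1 : ℂ) ^ t * (a.choose t) * ((a - t).choose (d - t))
                * lam ^ ((i : ℤ) - (k : ℕ)) := by ring
      rw [Finset.sum_congr rfl fun j _ => hstep j]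
      rw [Fin.sum_univ_eq_sum_range (fun jn : ℕ => if (i : ℕ) ≤ jn ∧ jn ≤ (k : ℕ) then
        ((-1 : ℂ) ^ (jn - (i : ℕ)) * (a.choose (jn - (i : ℕ)))
          * ((a - (jn - (i : ℕ))).choose (d - (jn - (i : ℕ)))))
        * lam ^ ((i : ℤ) - (k : ℕ)) else 0) n]
      have hfilter : (Finset.range n).filter
          (fun jn => (i : ℕ) ≤ jn ∧ jn ≤ (k : ℕ)) = Finset.Icc (i : ℕ) (k : ℕ) := by
        ext x
        simp only [Finset.mem_filter, Finset.mem_range, Finset.mem_Icc]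
        constructor
        · rintro ⟨_, h2, h3⟩; exact ⟨h2, h3⟩
        · rintro ⟨h2, h3⟩; exact ⟨by have := k.isLt; omega, h2, h3⟩
      rw [← Finset.sum_filter, hfilter, ← Finset.Ico_add_one_right_eq_Icc, Finset.sum_Ico_eq_sum_range,
        show (k : ℕ) + 1 - (i : ℕ) = d + 1 from by omega]
      simp only [Nat.add_sub_cancel_left]
      rw [← Finset.sum_mul, alt_sum_aux a d (by omega) (by omega), zero_mul]

theorem omega_inv {n : ℕ} (hn : 1 ≤ n) (lam : ℂ) (hlam : lam ≠ 0) :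
    IsUnit (Omega lam n) ∧ (Omega lam n)⁻¹ = Omega lam⁻¹ n := by
  have h1 : Omega lam n * Omega lam⁻¹ n = 1 := omega_mul n lam hlam
  have h2 : Omega lam⁻¹ n * Omega lam n = 1 := by
    have h := omega_mul n lam⁻¹ (inv_ne_zero hlam)
    rwa [inv_inv] at h
  exact ⟨⟨⟨Omega lam n, Omega lam⁻¹ n, h1, h2⟩, rfl⟩, Matrix.inv_eq_right_inv h1⟩
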